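/- One-step recursion for the soft robust intra-option policy gradient (intermediate claim in the proof of Theorem 2): In the setting of the intra-option policy gradient theorem (parameterized family πo : ℝ → O → S → A → ℝ, θ-independent πΩ, β, K, c, w, value functions (QΩ θ, Qo θ, Qβ θ, VΩ θ) satisfying the rectangular Bellman system for each θ, differentiability of πo and QΩ in θ at θ₀), for all s ∈ S and ω ∈ O: ∑_p w p * deriv (θ ↦ QΩ θ s ω p) θ₀ = (∑_a (deriv (θ ↦ πo θ ω s a) θ₀) * Q̄o θ₀ s ω a) + ∑_{(s',ω')} Pγ θ₀ ((s,ω),(s',ω')) * (∑_{p'} w p' * deriv (θ ↦ QΩ θ s' ω' p') θ₀). -/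

import Mathlib

open scoped Classical

open Finset

variable {S O A P : Type*} [Fintype S] [Fintype O] [Fintype A] [Fintype P]

/-- The average transition kernel `K̄ s a s' = ∑ p, w p * K p s a s'`. -/
noncomputable def Kbar (w : P → ℝ) (K : P → S → A → S → ℝ) (s : S) (a : A) (s' : S) : ℝ :=
  ∑ p, w p * K p s a s'

/-- One-step discounted state–option kernel `Pγ`. -/
noncomputable def Pgam (w : P → ℝ) (K : P → S → A → S → ℝ) (γ : ℝ)
    (πo : O → S → A → ℝ) (β : O → S → ℝ) (πΩ : S → O → ℝ)
    (x y : S × O) : ℝ :=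
  ∑ a, πo x.2 x.1 a * γ * Kbar w K x.1 a y.1 *
    ((1 - β x.2 y.1) * (if y.2 = x.2 then 1 else 0) + β x.2 y.1 * πΩ y.1 y.2)

/-- k-step iterates `Pγ^k` of the one-step discounted state–option kernel. -/
noncomputable def PgamIter (w : P → ℝ) (K : P → S → A → S → ℝ) (γ : ℝ)
    (πo : O → S → A → ℝ) (β : O → S → ℝ) (πΩ : S → O → ℝ) :
    ℕ → S × O → S × O → ℝ
  | 0, x, y => if y = x then 1 else 0
  | (k + 1), x, y => ∑ z, Pgam w K γ πo β πΩ x z * PgamIter w K γ πo β πΩ k z y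

/-- One-step recursion for the soft robust intra-option policy gradient
(intermediate claim in the proof of Theorem 2). -/
theorem intra_option_policy_gradient_one_step
    [Nonempty S] [Nonempty O] [Nonempty A] [Nonempty P]
    (γ : ℝ) (hγ0 : 0 ≤ γ) (hγ1 : γ < 1)
    (c : S → A → ℝ)
    (K : P → S → A → S → ℝ)
    (hK0 : ∀ p s a s', 0 ≤ K p s a s') (hK1 : ∀ p s a, ∑ s', K p s a s' = 1)
    (w : P → ℝ) (hw0 : ∀ p, 0 ≤ w p) (hw1 : ∑ p, w p = 1)
    (πΩ : S → O → ℝ)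
    (hπΩ0 : ∀ s ω, 0 ≤ πΩ s ω) (hπΩ1 : ∀ s, ∑ ω, πΩ s ω = 1)
    (πo : ℝ → O → S → A → ℝ)
    (hπo0 : ∀ θ ω s a, 0 ≤ πo θ ω s a) (hπo1 : ∀ θ ω s, ∑ a, πo θ ω s a = 1)
    (β : O → S → ℝ) (hβ0 : ∀ ω s, 0 ≤ β ω s) (hβ1 : ∀ ω s, β ω s ≤ 1)
    (QΩ : ℝ → S → O → P → ℝ) (Qo : ℝ → S → O → A → P → ℝ)
    (Qβ : ℝ → S → O → P → ℝ) (VΩ : ℝ → S → P → ℝ)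
    (hQΩ : ∀ θ s ω p, QΩ θ s ω p = ∑ a, πo θ ω s a * Qo θ s ω a p)
    (hQo : ∀ θ s ω a p,
      Qo θ s ω a p = c s a + γ * ∑ s', K p s a s' * (∑ p', w p' * Qβ θ s' ω p'))
    (hQβ : ∀ θ s ω p, Qβ θ s ω p = (1 - β ω s) * QΩ θ s ω p + β ω s * VΩ θ s p)
    (hVΩ : ∀ θ s p, VΩ θ s p = ∑ ω, πΩ s ω * QΩ θ s ω p)
    (θ₀ : ℝ)
    (hdπ : ∀ ω s a, DifferentiableAt ℝ (fun θ => πo θ ω s a) θ₀)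
    (hdQ : ∀ s ω p, DifferentiableAt ℝ (fun θ => QΩ θ s ω p) θ₀) :
    ∀ (s : S) (ω : O),
      ∑ p, w p * deriv (fun θ => QΩ θ s ω p) θ₀ =
        (∑ a, deriv (fun θ => πo θ ω s a) θ₀ * (∑ p, w p * Qo θ₀ s ω a p)) +
        ∑ q : S × O, Pgam w K γ (πo θ₀) β πΩ (s, ω) q *
          (∑ p', w p' * deriv (fun θ => QΩ θ q.1 q.2 p') θ₀) := by
  intro s ω
  classical
  set D : S → O → P → ℝ := fun s ω p => deriv (fun θ => QΩ θ s ω p) θ₀ with hDdef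
  have hDeq : ∀ (s : S) (ω : O) (p : P), deriv (fun θ => QΩ θ s ω p) θ₀ = D s ω p :=
    fun _ _ _ => rfl
  set Db : S → O → ℝ := fun s' ω' => ∑ p', w p' * D s' ω' p' with hDb
  have hDbeq : ∀ (s' : S) (ω' : O), (∑ p', w p' * D s' ω' p') = Db s' ω' := fun _ _ => rfl
  set G : S → ℝ := fun s' => (1 - β ω s') * Db s' ω + β ω s' * ∑ ω', πΩ s' ω' * Db s' ω' with hG
  -- unfolded Bellman equation for Qo
  have hQo' : ∀ (θ : ℝ) (s : S) (ω : O) (a : A) (p : P), Qo θ s ω a p =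
      c s a + γ * ∑ s', K p s a s' *
        (∑ p', w p' * ((1 - β ω s') * QΩ θ s' ω p' +
          β ω s' * ∑ ω', πΩ s' ω' * QΩ θ s' ω' p')) := by
    intro θ s ω a p
    rw [hQo]
    congr 2
    refine Finset.sum_congr rfl fun s' _ => ?_
    congr 1
    refine Finset.sum_congr rfl fun p' _ => ?_
    rw [hQβ, hVΩ]
  -- averaging claim
  have hA : ∀ s' : S,
      (∑ p', w p' * ((1 - β ω s') * D s' ω p' +
        β ω s' * ∑ ω', πΩ s' ω' * D s' ω' p')) = G s' := by
    intro s'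
    simp only [hG, hDb, mul_add, Finset.sum_add_distrib]
    congr 1
    · rw [Finset.mul_sum]
      exact Finset.sum_congr rfl fun p' _ => by ring
    · simp only [Finset.mul_sum]
      rw [Finset.sum_comm]
      exact Finset.sum_congr rfl fun ω' _ => Finset.sum_congr rfl fun p' _ => by ring
  -- derivative recursion
  have hder : ∀ p : P, D s ω p =
      ∑ a, (deriv (fun θ => πo θ ω s a) θ₀ * Qo θ₀ s ω a p
        + πo θ₀ ω s a * (γ * ∑ s', K p s a s' * G s')) := by
    intro p
    have hfun : (fun θ => QΩ θ s ω p) = fun θ =>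
        ∑ a, πo θ ω s a * (c s a + γ * ∑ s', K p s a s' *
          (∑ p', w p' * ((1 - β ω s') * QΩ θ s' ω p' +
            β ω s' * ∑ ω', πΩ s' ω' * QΩ θ s' ω' p'))) := by
      funext θ
      rw [hQΩ]
      exact Finset.sum_congr rfl fun a _ => by rw [hQo' θ s ω a p]
    have hinner : ∀ s' : S, HasDerivAt (fun θ =>
        ∑ p', w p' * ((1 - β ω s') * QΩ θ s' ω p' +
          β ω s' * ∑ ω', πΩ s' ω' * QΩ θ s' ω' p'))
        (∑ p', w p' * ((1 - β ω s') * D s' ω p' +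
          β ω s' * ∑ ω', πΩ s' ω' * D s' ω' p')) θ₀ := by
      intro s'
      refine HasDerivAt.fun_sum fun p' _ => ?_
      refine HasDerivAt.const_mul (w p') ?_
      refine HasDerivAt.add ?_ ?_
      · exact ((hdQ s' ω p').hasDerivAt).const_mul (1 - β ω s')
      · exact (HasDerivAt.fun_sum fun ω' _ =>
          ((hdQ s' ω' p').hasDerivAt).const_mul (πΩ s' ω')).const_mul (β ω s')
    have hg : ∀ a : A, HasDerivAt (fun θ => c s a + γ * ∑ s', K p s a s' *
        (∑ p', w p' * ((1 - β ω s') * QΩ θ s' ω p' +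
          β ω s' * ∑ ω', πΩ s' ω' * QΩ θ s' ω' p')))
        (γ * ∑ s', K p s a s' *
          (∑ p', w p' * ((1 - β ω s') * D s' ω p' +
            β ω s' * ∑ ω', πΩ s' ω' * D s' ω' p'))) θ₀ := fun a =>
      ((HasDerivAt.fun_sum fun s' _ =>
        (hinner s').const_mul (K p s a s')).const_mul γ).const_add (c s a)
    have hbig : HasDerivAt (fun θ => QΩ θ s ω p)
        (∑ a, (deriv (fun θ => πo θ ω s a) θ₀ * (c s a + γ * ∑ s', K p s a s' *
          (∑ p', w p' * ((1 - β ω s') * QΩ θ₀ s' ω p' +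
            β ω s' * ∑ ω', πΩ s' ω' * QΩ θ₀ s' ω' p')))
          + πo θ₀ ω s a * (γ * ∑ s', K p s a s' *
          (∑ p', w p' * ((1 - β ω s') * D s' ω p' +
            β ω s' * ∑ ω', πΩ s' ω' * D s' ω' p'))))) θ₀ := by
      rw [hfun]
      exact HasDerivAt.fun_sum fun a _ => ((hdπ ω s a).hasDerivAt).mul (hg a)
    have hd := hbig.deriv
    rw [show D s ω p = deriv (fun θ => QΩ θ s ω p) θ₀ from rfl, hd]
    refine Finset.sum_congr rfl fun a _ => ?_
    rw [← hQo' θ₀ s ω a p]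
    simp only [hA]
  -- LHS computation
  have hL : ∑ p, w p * D s ω p =
      (∑ a, deriv (fun θ => πo θ ω s a) θ₀ * (∑ p, w p * Qo θ₀ s ω a p))
      + ∑ a, πo θ₀ ω s a * (γ * ∑ s', Kbar w K s a s' * G s') := by
    calc ∑ p, w p * D s ω p
        = ∑ p, ∑ a, (w p * (deriv (fun θ => πo θ ω s a) θ₀ * Qo θ₀ s ω a p)
            + w p * (πo θ₀ ω s a * (γ * ∑ s', K p s a s' * G s'))) := by
          refine Finset.sum_congr rfl fun p _ => ?_
          rw [hder p, Finset.mul_sum]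
          exact Finset.sum_congr rfl fun a _ => by ring
      _ = ∑ a, ∑ p, (w p * (deriv (fun θ => πo θ ω s a) θ₀ * Qo θ₀ s ω a p)
            + w p * (πo θ₀ ω s a * (γ * ∑ s', K p s a s' * G s'))) := Finset.sum_comm
      _ = (∑ a, ∑ p, w p * (deriv (fun θ => πo θ ω s a) θ₀ * Qo θ₀ s ω a p))
            + ∑ a, ∑ p, w p * (πo θ₀ ω s a * (γ * ∑ s', K p s a s' * G s')) := by
          rw [← Finset.sum_add_distrib]
          exact Finset.sum_congr rfl fun a _ => Finset.sum_add_distrib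
      _ = (∑ a, deriv (fun θ => πo θ ω s a) θ₀ * (∑ p, w p * Qo θ₀ s ω a p))
            + ∑ a, πo θ₀ ω s a * (γ * ∑ s', Kbar w K s a s' * G s') := by
          congr 1
          · refine Finset.sum_congr rfl fun a _ => ?_
            rw [Finset.mul_sum]
            exact Finset.sum_congr rfl fun p _ => by ring
          · refine Finset.sum_congr rfl fun a _ => ?_
            simp only [Kbar, Finset.mul_sum, Finset.sum_mul]
            rw [Finset.sum_comm]
            exact Finset.sum_congr rfl fun p _ => Finset.sum_congr rfl fun s' _ => by ring
  -- RHS computation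
  have key2 : ∀ (a : A) (s' : S), (∑ ω', πo θ₀ ω s a * γ * Kbar w K s a s' *
      ((1 - β ω s') * (if ω' = ω then 1 else 0) + β ω s' * πΩ s' ω') * Db s' ω')
      = πo θ₀ ω s a * (γ * (Kbar w K s a s' * G s')) := by
    intro a s'
    have hsplit : ∀ ω' : O, πo θ₀ ω s a * γ * Kbar w K s a s' *
        ((1 - β ω s') * (if ω' = ω then 1 else 0) + β ω s' * πΩ s' ω') * Db s' ω'
        = (if ω' = ω then
            πo θ₀ ω s a * γ * Kbar w K s a s' * ((1 - β ω s') * Db s' ω') else 0)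
          + πo θ₀ ω s a * (γ * (Kbar w K s a s' * (β ω s' * (πΩ s' ω' * Db s' ω')))) := by
      intro ω'
      by_cases h : ω' = ω <;> simp [h] <;> ring
    rw [Finset.sum_congr rfl fun ω' _ => hsplit ω', Finset.sum_add_distrib,
      Finset.sum_ite_eq' Finset.univ ω
        (fun ω' => πo θ₀ ω s a * γ * Kbar w K s a s' * ((1 - β ω s') * Db s' ω'))]
    simp only [Finset.mem_univ, if_true, hG]
    simp only [mul_add, Finset.mul_sum]
    congr 1
    all_goals first
      | ring
      | exact Finset.sum_congr rfl fun ω' _ => by ring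
  have hR : (∑ q : S × O, Pgam w K γ (πo θ₀) β πΩ (s, ω) q * Db q.1 q.2)
      = ∑ a, πo θ₀ ω s a * (γ * ∑ s', Kbar w K s a s' * G s') := by
    rw [Fintype.sum_prod_type]
    calc ∑ s', ∑ ω', Pgam w K γ (πo θ₀) β πΩ (s, ω) (s', ω') * Db s' ω'
        = ∑ s', ∑ ω', ∑ a, πo θ₀ ω s a * γ * Kbar w K s a s' *
            ((1 - β ω s') * (if ω' = ω then 1 else 0) + β ω s' * πΩ s' ω') * Db s' ω' := by
          refine Finset.sum_congr rfl fun s' _ => Finset.sum_congr rfl fun ω' _ => ?_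
          rw [Pgam, Finset.sum_mul]
      _ = ∑ s', ∑ a, ∑ ω', πo θ₀ ω s a * γ * Kbar w K s a s' *
            ((1 - β ω s') * (if ω' = ω then 1 else 0) + β ω s' * πΩ s' ω') * Db s' ω' :=
          Finset.sum_congr rfl fun s' _ => Finset.sum_comm
      _ = ∑ a, ∑ s', ∑ ω', πo θ₀ ω s a * γ * Kbar w K s a s' *
            ((1 - β ω s') * (if ω' = ω then 1 else 0) + β ω s' * πΩ s' ω') * Db s' ω' :=
          Finset.sum_comm
      _ = ∑ a, ∑ s', πo θ₀ ω s a * (γ * (Kbar w K s a s' * G s')) :=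
          Finset.sum_congr rfl fun a _ => Finset.sum_congr rfl fun s' _ => key2 a s'
      _ = ∑ a, πo θ₀ ω s a * (γ * ∑ s', Kbar w K s a s' * G s') := by
          refine Finset.sum_congr rfl fun a _ => ?_
          simp only [Finset.mul_sum]
  simp only [hDeq, hDbeq]
  rw [hR, show Db s ω = ∑ p, w p * D s ω p from rfl, hL]
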